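/- Let M ≥ 2 and T : ℕ → ℝ → ℝ be positive functions satisfying the T-system T_j(x+1)T_j(x-1) = 1 + T_{j+1}(x)T_{j-1}(x) (1 ≤ j ≤ 2M-1), T_0 = 1, duality T_{M-j} = T_{M+j}, and additionally the generalized T-system identity T_M(x+2)·T_1(x+(M+3)) = T_{M-1}(x+1) + T_{M-1}(x+3) for all x. Define ψ(x) = arcsin(1/√(T_M(x)T_M(x+2))). Then sin(ψ(x) + ψ(x+2)) = T_1(x+(M+3))/√(T_M(x)·T_M(x+4)). -/

import Mathlib

open Real

theorem sin_psi_pair (M : ℕ) (hM : 2 ≤ M) (T : ℕ → ℝ → ℝ)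
    (hpos : ∀ j, j ≤ 2*M → ∀ x, 0 < T j x)
    (h0 : ∀ x, T 0 x = 1)
    (hsys : ∀ j, 1 ≤ j → j ≤ 2*M-1 → ∀ x : ℝ,
      T j (x+1) * T j (x-1) = 1 + T (j+1) x * T (j-1) x)
    (hdual : ∀ j, 1 ≤ j → j ≤ M → ∀ x : ℝ, T (M-j) x = T (M+j) x)
    (hgen : ∀ x : ℝ, T M (x+2) * T 1 (x+((M:ℝ)+3)) = T (M-1) (x+1) + T (M-1) (x+3))
    (ψ : ℝ → ℝ)
    (hψ : ∀ x, ψ x = Real.arcsin (1 / Real.sqrt (T M x * T M (x+2)))) :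
    ∀ x : ℝ, Real.sin (ψ x + ψ (x+2)) =
      T 1 (x+((M:ℝ)+3)) / Real.sqrt (T M x * T M (x+4)) := by
  have hM1 : 1 ≤ M := le_trans (by norm_num) hM
  have key : ∀ y : ℝ, T M y * T M (y+2) = 1 + (T (M-1) (y+1))^2 := by
    intro y
    have h := hsys M hM1 (by omega) (y+1)
    have hd := hdual 1 le_rfl hM1 (y+1)
    rw [show y+1+1 = y+2 by ring, show y+1-1 = y by ring] at h
    rw [← hd] at h
    rw [sq]; linarith [h]
  have sincos : ∀ y : ℝ, Real.sin (ψ y) = 1 / Real.sqrt (T M y * T M (y+2)) ∧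
      Real.cos (ψ y) = T (M-1) (y+1) / Real.sqrt (T M y * T M (y+2)) := by
    intro y
    set c := T (M-1) (y+1) with hcdef
    have hc : 0 < c := hpos (M-1) (by omega) (y+1)
    have hA : T M y * T M (y+2) = 1 + c^2 := key y
    have hApos : 0 < T M y * T M (y+2) := by nlinarith
    have hsq : 0 < Real.sqrt (T M y * T M (y+2)) := Real.sqrt_pos.2 hApos
    have h1 : 1 / Real.sqrt (T M y * T M (y+2)) ≤ 1 := by
      rw [div_le_one hsq]
      have : (1:ℝ) = Real.sqrt 1 := by simp
      rw [this]
      exact Real.sqrt_le_sqrt (by nlinarith)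
    have hm1 : (-1:ℝ) ≤ 1 / Real.sqrt (T M y * T M (y+2)) := by
      have : (0:ℝ) ≤ 1 / Real.sqrt (T M y * T M (y+2)) := by positivity
      linarith
    constructor
    · rw [hψ, Real.sin_arcsin hm1 h1]
    · rw [hψ, Real.cos_arcsin]
      have hsqA : (Real.sqrt (T M y * T M (y+2)))^2 = T M y * T M (y+2) :=
        Real.sq_sqrt hApos.le
      have : 1 - (1 / Real.sqrt (T M y * T M (y+2)))^2 = c^2 / (T M y * T M (y+2)) := by
        rw [div_pow, one_pow, hsqA]
        field_simp
        rw [eq_div_iff hApos.ne', sub_mul, one_div_mul_cancel hApos.ne']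
        linarith [hA]
      rw [this, Real.sqrt_div (sq_nonneg c), Real.sqrt_sq hc.le]
  intro x
  obtain ⟨s1, c1⟩ := sincos x
  obtain ⟨s2, c2⟩ := sincos (x+2)
  rw [show x+2+2 = x+4 by ring] at s2
  rw [show x+2+1 = x+3 by ring, show x+2+2 = x+4 by ring] at c2
  rw [Real.sin_add, s1, c1, s2, c2]
  have p0 := hpos M (by omega) x
  have p2 := hpos M (by omega) (x+2)
  have p4 := hpos M (by omega) (x+4)
  have hApos : 0 < T M x * T M (x+2) := mul_pos p0 p2
  have hBpos : 0 < T M (x+2) * T M (x+4) := mul_pos p2 p4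
  have hCpos : 0 < T M x * T M (x+4) := mul_pos p0 p4
  have hsA : 0 < Real.sqrt (T M x * T M (x+2)) := Real.sqrt_pos.2 hApos
  have hsB : 0 < Real.sqrt (T M (x+2) * T M (x+4)) := Real.sqrt_pos.2 hBpos
  have hsC : 0 < Real.sqrt (T M x * T M (x+4)) := Real.sqrt_pos.2 hCpos
  have hAB : Real.sqrt (T M x * T M (x+2)) * Real.sqrt (T M (x+2) * T M (x+4))
      = T M (x+2) * Real.sqrt (T M x * T M (x+4)) := by
    rw [← Real.sqrt_mul hApos.le,
      show (T M x * T M (x+2)) * (T M (x+2) * T M (x+4))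
        = (T M (x+2))^2 * (T M x * T M (x+4)) by ring,
      Real.sqrt_mul (sq_nonneg _), Real.sqrt_sq p2.le]
  have hg := hgen x
  rw [div_mul_div_comm, div_mul_div_comm, one_mul, mul_one, ← add_div, hAB,
    div_eq_div_iff (by positivity) hsC.ne']
  linear_combination (-Real.sqrt (T M x * T M (x+4))) * hg
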